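/- For any α ∈ (0,1], the set D*_α = {φ : ℕ₊ → ℕ₊ strictly increasing with δ_α(ℕ₊ ∖ range φ) = 0} is closed under composition: if φ, ψ ∈ D*_α, then φ ∘ ψ ∈ D*_α, i.e., δ_α(ℕ₊ ∖ range(φ ∘ ψ)) = 0. -/

import Mathlib

/-- The `α`-density of a set `A` of positive integers is `d` if
`#(A ∩ [1,n]) / n^α → d` as `n → ∞` (here `n^α` is the real power `rpow`). -/
def HasAlphaDensity (α : ℝ) (A : Set ℕ+) (d : ℝ) : Prop :=
  Filter.Tendsto (fun n : ℕ+ => ((A ∩ Set.Iic n).ncard : ℝ) / (n : ℝ) ^ α)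
    Filter.atTop (nhds d)

lemma pnat_le_apply {φ : ℕ+ → ℕ+} (hφ : StrictMono φ) (k : ℕ+) : k ≤ φ k := by
  induction k using PNat.strongInductionOn with
  | _ k ih =>
    by_contra h
    push_neg at h
    have := ih (φ k) h
    exact absurd (lt_of_le_of_lt this (hφ h)) (lt_irrefl _)

/-- for any `α ∈ (0,1]`, the class `D*_α` of strictly increasing
`φ : ℕ₊ → ℕ₊` with `δ_α(ℕ₊ \ range φ) = 0` is closed under composition. -/
theorem stmt5 (α : ℝ) (h0 : 0 < α) (h1 : α ≤ 1)
    (φ ψ : ℕ+ → ℕ+) (hφ : StrictMono φ) (hψ : StrictMono ψ)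
    (hφd : HasAlphaDensity α (Set.range φ)ᶜ 0)
    (hψd : HasAlphaDensity α (Set.range ψ)ᶜ 0) :
    HasAlphaDensity α (Set.range (φ ∘ ψ))ᶜ 0 := by
  have key : ∀ n : ℕ+,
      ((Set.range (φ ∘ ψ))ᶜ ∩ Set.Iic n).ncard ≤
      ((Set.range φ)ᶜ ∩ Set.Iic n).ncard + ((Set.range ψ)ᶜ ∩ Set.Iic n).ncard := by
    intro n
    have hfin : ∀ A : Set ℕ+, (A ∩ Set.Iic n).Finite :=
      fun A => (Set.finite_Iic n).inter_of_right A
    have hsub : (Set.range (φ ∘ ψ))ᶜ ∩ Set.Iic n ⊆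
        ((Set.range φ)ᶜ ∩ Set.Iic n) ∪ φ '' ((Set.range ψ)ᶜ ∩ Set.Iic n) := by
      rintro m ⟨hm, hmn⟩
      by_cases hr : m ∈ Set.range φ
      · obtain ⟨k, rfl⟩ := hr
        right
        refine ⟨k, ⟨fun ⟨j, hj⟩ => hm ⟨j, by simp [hj]⟩,
          le_trans (pnat_le_apply hφ k) hmn⟩, rfl⟩
      · exact Or.inl ⟨hr, hmn⟩
    calc ((Set.range (φ ∘ ψ))ᶜ ∩ Set.Iic n).ncard
        ≤ (((Set.range φ)ᶜ ∩ Set.Iic n) ∪ φ '' ((Set.range ψ)ᶜ ∩ Set.Iic n)).ncard :=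
          Set.ncard_le_ncard hsub (((hfin _).union ((hfin _).image φ)))
      _ ≤ ((Set.range φ)ᶜ ∩ Set.Iic n).ncard + (φ '' ((Set.range ψ)ᶜ ∩ Set.Iic n)).ncard :=
          Set.ncard_union_le _ _
      _ = _ := by rw [Set.ncard_image_of_injective _ hφ.injective]
  have hsum := hφd.add hψd
  rw [add_zero] at hsum
  unfold HasAlphaDensity
  refine tendsto_of_tendsto_of_tendsto_of_le_of_le
    tendsto_const_nhds hsum (fun n => by positivity) (fun n => ?_)
  have hpos : (0 : ℝ) < (n : ℝ) ^ α := Real.rpow_pos_of_pos (by exact_mod_cast n.pos) α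
  rw [← add_div]
  apply div_le_div_of_nonneg_right ?_ hpos.le
  exact_mod_cast key n
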